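/- Let p be a prime, i ≥ 1, j ≥ 0, and let U = U_i(Z/p^{j+1}) be the group of unitriangular (i+1)×(i+1) matrices over Z/p^{j+1}. For 1 ≤ i' ≤ i let U^{(i')} be the subgroup of U consisting of matrices that vanish on the first i'−1 diagonals above the main diagonal, and let j' ≥ 0. Then the subgroup (U^{(i')})^{p^{j'}} generated by the p^{j'}-th powers of elements of U^{(i')} is trivial if and only if j' ≥ j + 1 + ⌊log_p(i/i')⌋. -/

import Mathlib

variable (R : Type*) [CommRing R] (m : ℕ)

/-- A square matrix is unitriangular if it is upper triangular with all diagonal entries `1`. -/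
def IsUnitriangular (M : Matrix (Fin m) (Fin m) R) : Prop :=
  (∀ k, M k k = 1) ∧ ∀ k l : Fin m, l < k → M k l = 0

/-- The group of unitriangular `m × m` matrices over `R`, as a subgroup of the units of the
matrix ring. -/
def UT : Subgroup (Matrix (Fin m) (Fin m) R)ˣ where
  carrier := {M | IsUnitriangular R m (M : Matrix (Fin m) (Fin m) R)}
  one_mem' := by
    constructor
    · intro k; simp [Matrix.one_apply]
    · intro k l h; simp [Matrix.one_apply, (ne_of_lt h).symm]
  mul_mem' := by
    rintro A B ⟨hA1, hA2⟩ ⟨hB1, hB2⟩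
    constructor
    · intro k
      rw [Units.val_mul, Matrix.mul_apply]
      rw [Finset.sum_eq_single k]
      · rw [hA1, hB1, one_mul]
      · intro j _ hj
        rcases lt_or_gt_of_ne hj with h | h
        · rw [hA2 _ _ h, zero_mul]
        · rw [hB2 _ _ h, mul_zero]
      · intro h; exact absurd (Finset.mem_univ k) h
    · intro k l hlk
      rw [Units.val_mul, Matrix.mul_apply]
      apply Finset.sum_eq_zero
      intro j _
      rcases lt_or_ge (j : Fin m) k with h | h
      · rw [hA2 _ _ h, zero_mul]
      · rw [hB2 _ _ (lt_of_lt_of_le hlk h), mul_zero]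
  inv_mem' := by
    rintro A ⟨hA1, hA2⟩
    have hcoe : ((A⁻¹ : (Matrix (Fin m) (Fin m) R)ˣ) : Matrix (Fin m) (Fin m) R) =
        ((A : Matrix (Fin m) (Fin m) R))⁻¹ := Matrix.coe_units_inv A
    haveI : Invertible (A : Matrix (Fin m) (Fin m) R) := A.invertible
    have hBT : Matrix.BlockTriangular (A : Matrix (Fin m) (Fin m) R) id :=
      fun k l h => hA2 k l h
    have hBTinv : Matrix.BlockTriangular ((A : Matrix (Fin m) (Fin m) R))⁻¹ id :=
      Matrix.blockTriangular_inv_of_blockTriangular hBT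
    constructor
    · intro k
      have hmul := congrFun (congrFun
        (Matrix.mul_inv_of_invertible (A : Matrix (Fin m) (Fin m) R)) k) k
      rw [Matrix.mul_apply] at hmul
      rw [Finset.sum_eq_single k] at hmul
      · rw [hA1] at hmul
        rw [hcoe]
        simpa using hmul
      · intro j _ hj
        rcases lt_or_gt_of_ne hj with h | h
        · rw [hA2 _ _ h, zero_mul]
        · rw [hBTinv (show id k < id j from h), mul_zero]
      · intro hmem; exact absurd (Finset.mem_univ k) hmem
    · intro k l h
      rw [hcoe]
      exact hBTinv h

/-- The subgroup `U^{(i')}` of the unitriangular group, consisting of the matrices whose entries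
on the first `i' - 1` diagonals above the main diagonal all vanish. -/
def UTk (i' : ℕ) : Subgroup ↥(UT R m) where
  carrier := {M | ∀ k l : Fin m, (k : ℕ) < l → (l : ℕ) < k + i' →
    ((M : (Matrix (Fin m) (Fin m) R)ˣ) : Matrix (Fin m) (Fin m) R) k l = 0}
  one_mem' := by
    intro k l h1 h2
    have hkl : k ≠ l := fun h => by simp [h] at h1
    simp [Matrix.one_apply, hkl]
  mul_mem' := by
    rintro A B hA hB k l hkl hli
    have hAut := A.2
    have hBut := B.2
    show ((↑A * ↑B : (Matrix (Fin m) (Fin m) R)ˣ) : Matrix (Fin m) (Fin m) R) k l = 0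
    rw [Units.val_mul, Matrix.mul_apply]
    apply Finset.sum_eq_zero
    intro j _
    rcases lt_trichotomy (j : ℕ) (k : ℕ) with h | h | h
    · rw [hAut.2 k j (Fin.lt_def.mpr h), zero_mul]
    · have hj : j = k := Fin.ext h
      subst hj
      rw [hB j l hkl hli, mul_zero]
    · rcases lt_or_ge (l : ℕ) (j : ℕ) with h' | h'
      · rw [hBut.2 j l (Fin.lt_def.mpr h'), mul_zero]
      · rw [hA k j h (lt_of_le_of_lt h' hli), zero_mul]
  inv_mem' := by
    rintro A hA k l hkl hli
    have hAut := A.2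
    have hinv := (A⁻¹).2
    have hone : ((↑A : (Matrix (Fin m) (Fin m) R)ˣ) : Matrix (Fin m) (Fin m) R) *
        ((↑A⁻¹ : (Matrix (Fin m) (Fin m) R)ˣ) : Matrix (Fin m) (Fin m) R) = 1 := by
      rw [← Units.val_mul]
      norm_cast
      rw [mul_inv_cancel]
      rfl
    have hentry := congrFun (congrFun hone k) l
    rw [Matrix.mul_apply] at hentry
    rw [Finset.sum_eq_single k] at hentry
    · have hkl' : k ≠ l := fun h => by simp [h] at hkl
      rw [hAut.1] at hentry
      rw [Matrix.one_apply_ne hkl'] at hentry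
      simpa using hentry
    · intro j _ hj
      rcases lt_trichotomy (j : ℕ) (k : ℕ) with h | h | h
      · rw [hAut.2 k j (Fin.lt_def.mpr h), zero_mul]
      · exact absurd (Fin.ext h) hj
      · rcases lt_or_ge (j : ℕ) ((k : ℕ) + i') with h' | h'
        · rw [hA k j h h', zero_mul]
        · rw [hinv.2 j l (Fin.lt_def.mpr (lt_of_lt_of_le hli h')), mul_zero]
    · intro hmem; exact absurd (Finset.mem_univ k) hmem

/-- The subgroup generated by the `q`-th powers of the elements of a subgroup. -/
def pPow {G : Type*} [Group G] (K : Subgroup G) (q : ℕ) : Subgroup G :=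
  Subgroup.closure {x | ∃ y ∈ K, x = y ^ q}

/-- An auxiliary product identity for corner matrices. -/

theorem corner_mul (p j i : ℕ) (R : Type*) [CommRing R] (hi : 0 < i) (a b : R) :
    (1 + Matrix.single (0 : Fin (i+1)) (Fin.last i) ((p : R) ^ j * a)) *
      (1 + Matrix.single (0 : Fin (i+1)) (Fin.last i) ((p : R) ^ j * b)) =
    1 + Matrix.single (0 : Fin (i+1)) (Fin.last i) ((p : R) ^ j * (a + b)) := by
  have hne : Fin.last i ≠ (0 : Fin (i+1)) := by simp [Fin.ext_iff, Fin.last]; omega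
  rw [mul_add, add_mul, add_mul, one_mul, mul_one, one_mul,
    Matrix.single_mul_single_of_ne (h := hne), mul_add, Matrix.single_add]
  abel


/-- The subgroup `I + p^j (ℤ/p^{j+1}) E_{1,i+1}` of the unitriangular `(i+1) × (i+1)` matrices
over `ℤ/p^{j+1}`: matrices differing from the identity only at the upper-right corner entry,
by a multiple of `p^j`. -/
def cornerSub (p j i : ℕ) : Subgroup ↥(UT (ZMod (p ^ (j + 1))) (i + 1)) where
  carrier := {M | ∃ a : ZMod (p ^ (j + 1)),
    ((M : (Matrix (Fin (i + 1)) (Fin (i + 1)) (ZMod (p ^ (j + 1))))ˣ) :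
        Matrix (Fin (i + 1)) (Fin (i + 1)) (ZMod (p ^ (j + 1)))) =
      1 + Matrix.single 0 (Fin.last i) ((p : ZMod (p ^ (j + 1))) ^ j * a)}
  one_mem' := ⟨0, by simp⟩
  mul_mem' := by
    rintro A B ⟨a, ha⟩ ⟨b, hb⟩
    refine ⟨a + b, ?_⟩
    have hAB : ((↑(A * B) : (Matrix (Fin (i + 1)) (Fin (i + 1)) (ZMod (p ^ (j + 1))))ˣ) :
        Matrix (Fin (i + 1)) (Fin (i + 1)) (ZMod (p ^ (j + 1)))) =
        ((↑A : (Matrix (Fin (i + 1)) (Fin (i + 1)) (ZMod (p ^ (j + 1))))ˣ) :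
          Matrix (Fin (i + 1)) (Fin (i + 1)) (ZMod (p ^ (j + 1)))) *
        ((↑B : (Matrix (Fin (i + 1)) (Fin (i + 1)) (ZMod (p ^ (j + 1))))ˣ) :
          Matrix (Fin (i + 1)) (Fin (i + 1)) (ZMod (p ^ (j + 1)))) := rfl
    rw [hAB, ha, hb]
    rcases Nat.eq_zero_or_pos i with hi | hi
    · subst hi
      have hca : (p : ZMod (p ^ (j + 1))) ^ j * a = 0 := by
        have hd := A.2.1 0
        rw [ha] at hd
        simpa [Matrix.add_apply, Matrix.one_apply, Fin.last] using hd
      have hcb : (p : ZMod (p ^ (j + 1))) ^ j * b = 0 := by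
        have hd := B.2.1 0
        rw [hb] at hd
        simpa [Matrix.add_apply, Matrix.one_apply, Fin.last] using hd
      simp [mul_add, hca, hcb]
    · exact corner_mul p j i _ hi a b
  inv_mem' := by
    rintro A ⟨a, ha⟩
    refine ⟨-a, ?_⟩
    have key : ((↑A : (Matrix (Fin (i + 1)) (Fin (i + 1)) (ZMod (p ^ (j + 1))))ˣ) :
        Matrix (Fin (i + 1)) (Fin (i + 1)) (ZMod (p ^ (j + 1)))) *
        (1 + Matrix.single 0 (Fin.last i) ((p : ZMod (p ^ (j + 1))) ^ j * (-a))) =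
        1 := by
      rcases Nat.eq_zero_or_pos i with hi | hi
      · subst hi
        have hca : (p : ZMod (p ^ (j + 1))) ^ j * a = 0 := by
          have hd := A.2.1 0
          rw [ha] at hd
          simpa [Matrix.add_apply, Matrix.one_apply, Fin.last] using hd
        have hca' : (p : ZMod (p ^ (j + 1))) ^ j * (-a) = 0 := by
          rw [mul_neg, hca, neg_zero]
        rw [ha, hca, hca']
        simp
      · rw [ha, corner_mul p j i _ hi a (-a)]
        simp
    calc ((↑A⁻¹ : (Matrix (Fin (i + 1)) (Fin (i + 1)) (ZMod (p ^ (j + 1))))ˣ) :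
          Matrix (Fin (i + 1)) (Fin (i + 1)) (ZMod (p ^ (j + 1)))) =
        ((↑A⁻¹ : (Matrix (Fin (i + 1)) (Fin (i + 1)) (ZMod (p ^ (j + 1))))ˣ) :
          Matrix (Fin (i + 1)) (Fin (i + 1)) (ZMod (p ^ (j + 1)))) * 1 := (mul_one _).symm
      _ = ((↑A⁻¹ : (Matrix (Fin (i + 1)) (Fin (i + 1)) (ZMod (p ^ (j + 1))))ˣ) :
          Matrix (Fin (i + 1)) (Fin (i + 1)) (ZMod (p ^ (j + 1)))) *
          (((↑A : (Matrix (Fin (i + 1)) (Fin (i + 1)) (ZMod (p ^ (j + 1))))ˣ) :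
            Matrix (Fin (i + 1)) (Fin (i + 1)) (ZMod (p ^ (j + 1)))) *
          (1 + Matrix.single 0 (Fin.last i)
            ((p : ZMod (p ^ (j + 1))) ^ j * (-a)))) := by rw [key]
      _ = 1 + Matrix.single 0 (Fin.last i)
            ((p : ZMod (p ^ (j + 1))) ^ j * (-a)) := by
          rw [← mul_assoc, ← Units.val_mul]
          norm_cast
          rw [inv_mul_cancel]
          simp

/-- Let `p` be a prime, `i ≥ 1`, `j ≥ 0`, `U = U_i(ℤ/p^{j+1})` the group of unitriangular
`(i+1) × (i+1)` matrices, `1 ≤ i' ≤ i`, and `j' ≥ 0`.  The subgroup of `U` generated by the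
`p^{j'}`-th powers of elements of `U^{(i')}` is trivial if and only if
`j' ≥ j + 1 + ⌊log_p (i / i')⌋`. -/

lemma aux_dvd_choose {p j j' k : ℕ} (hp : p.Prime) (hk : k ≠ 0) (hkq : k ≤ p ^ j')
    (hlog : j + 1 + Nat.log p k ≤ j') : p ^ (j + 1) ∣ (p ^ j').choose k := by
  apply pow_dvd_of_le_emultiplicity
  rw [Nat.Prime.emultiplicity_choose_prime_pow hp hkq hk]
  have h1 : p ^ multiplicity p k ∣ k := pow_multiplicity_dvd p k
  have h2 : multiplicity p k ≤ Nat.log p k := by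
    rw [Nat.le_log_iff_pow_le hp.one_lt hk]
    exact Nat.le_of_dvd (Nat.pos_of_ne_zero hk) h1
  exact Nat.cast_le.mpr (by omega)

lemma aux_not_dvd_choose {p j j' m : ℕ} (hp : p.Prime) (hmj' : m ≤ j') (hlt : j' ≤ j + m) :
    ¬ p ^ (j + 1) ∣ (p ^ j').choose (p ^ m) := by
  intro hdvd
  have h1 := le_emultiplicity_of_pow_dvd hdvd
  rw [Nat.Prime.emultiplicity_choose_prime_pow hp
      (Nat.pow_le_pow_right hp.pos hmj' |>.trans_eq rfl) (pow_ne_zero m hp.pos.ne'),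
    multiplicity_pow_self_of_prime hp.prime] at h1
  have h2 : j + 1 ≤ j' - m := by exact_mod_cast h1
  omega


def BandedM {S : Type*} [CommRing S] {n : ℕ} (c : ℕ) (N : Matrix (Fin n) (Fin n) S) : Prop :=
  ∀ k l : Fin n, (l : ℕ) < (k : ℕ) + c → N k l = 0

lemma bandedM_mul {S : Type*} [CommRing S] {n : ℕ} {a b : ℕ}
    {A B : Matrix (Fin n) (Fin n) S} (hA : BandedM a A) (hB : BandedM b B) :
    BandedM (a + b) (A * B) := by
  intro k l hl
  rw [Matrix.mul_apply]
  apply Finset.sum_eq_zero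
  intro x _
  rcases lt_or_ge (x : ℕ) ((k : ℕ) + a) with h | h
  · rw [hA k x h, zero_mul]
  · rw [hB x l (by omega), mul_zero]

lemma bandedM_pow {S : Type*} [CommRing S] {n : ℕ} {c : ℕ}
    {A : Matrix (Fin n) (Fin n) S} (hA : BandedM c A) (k : ℕ) :
    BandedM (k * c) (A ^ k) := by
  induction k with
  | zero =>
    intro a b hb
    rw [pow_zero]
    exact Matrix.one_apply_ne (by intro h; subst h; omega)
  | succ k ih =>
    rw [pow_succ]
    have := bandedM_mul ih hA
    rwa [show k * c + c = (k + 1) * c by ring] at this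

lemma bandedM_eq_zero {S : Type*} [CommRing S] {n : ℕ} {c : ℕ}
    {A : Matrix (Fin n) (Fin n) S} (hA : BandedM c A) (hn : n ≤ c) : A = 0 := by
  ext k l
  exact hA k l (by have := l.isLt; omega)

lemma forward_matrix {S : Type*} [CommRing S] {n i' q : ℕ}
    (N : Matrix (Fin n) (Fin n) S) (hN : BandedM i' N)
    (hcoef : ∀ k, 0 < k → k * i' < n → (q.choose k : S) = 0) :
    (1 + N) ^ q = 1 := by
  rw [add_comm, (Commute.one_right N).add_pow]
  rw [Finset.sum_eq_single 0]
  · simp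
  · intro m _ hm
    rcases lt_or_ge (m * i') n with h | h
    · have h0 : ((q.choose m : ℕ) : Matrix (Fin n) (Fin n) S) = 0 := by
        have he : ((q.choose m : ℕ) : Matrix (Fin n) (Fin n) S) =
            Matrix.diagonal (fun _ => ((q.choose m : ℕ) : S)) := rfl
        rw [he, hcoef m (Nat.pos_of_ne_zero hm) h]
        simp
      rw [h0, mul_zero]
    · rw [bandedM_eq_zero (bandedM_pow hN m) h]
      simp
  · intro h
    exact absurd (Finset.mem_range.mpr (Nat.succ_pos q)) h

lemma rowzero {S : Type*} [CommRing S] {n d i' : ℕ} (hi' : 0 < i') (hdn : d * i' < n)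
    (N : Matrix (Fin n) (Fin n) S)
    (hNdef : ∀ k l : Fin n, N k l =
      if ∃ s, s < d ∧ (k : ℕ) = s * i' ∧ (l : ℕ) = (s + 1) * i' then 1 else 0) (m : ℕ) :
    ∀ l : Fin n, (N ^ m) ⟨0, by omega⟩ l = if m ≤ d ∧ (l : ℕ) = m * i' then 1 else 0 := by
  induction m with
  | zero =>
    intro l
    rw [pow_zero, Matrix.one_apply]
    by_cases hl : (l : ℕ) = 0
    · have h0 : (⟨0, by omega⟩ : Fin n) = l := Fin.ext hl.symm
      simp [h0, hl]
    · have h0 : (⟨0, by omega⟩ : Fin n) ≠ l := fun h => hl (by rw [← h])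
      simp [h0, hl]
  | succ m ih =>
    intro l
    rw [pow_succ, Matrix.mul_apply]
    by_cases hm : m ≤ d
    · have hx0 : m * i' < n := lt_of_le_of_lt (Nat.mul_le_mul_right i' hm) hdn
      set x0 : Fin n := ⟨m * i', hx0⟩ with hx0def
      rw [Finset.sum_eq_single x0]
      · rw [ih x0, if_pos ⟨hm, rfl⟩, one_mul, hNdef x0 l]
        have hiff : (∃ s, s < d ∧ (x0 : ℕ) = s * i' ∧ (l : ℕ) = (s + 1) * i') ↔
            (m + 1 ≤ d ∧ (l : ℕ) = (m + 1) * i') := by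
          constructor
          · rintro ⟨s, hs, hx, hl⟩
            have hsm : m = s := Nat.eq_of_mul_eq_mul_right hi' (by rw [← hx])
            subst hsm
            exact ⟨by omega, hl⟩
          · rintro ⟨h1, h2⟩
            exact ⟨m, by omega, rfl, h2⟩
        rw [if_congr hiff rfl rfl]
      · intro x _ hx
        rw [ih x, if_neg, zero_mul]
        rintro ⟨-, hxv⟩
        exact hx (Fin.ext (by simpa using hxv))
      · intro h; exact absurd (Finset.mem_univ x0) h
    · rw [Finset.sum_eq_zero fun x _ => by rw [ih x, if_neg (by tauto), zero_mul],
        if_neg (by omega)]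

lemma backward_entry {S : Type*} [CommRing S] {n d i' q k0 : ℕ} (hi' : 0 < i')
    (hdn : d * i' < n) (hk0d : k0 ≤ d) (hk0q : k0 ≤ q)
    (N : Matrix (Fin n) (Fin n) S)
    (hNdef : ∀ k l : Fin n, N k l =
      if ∃ s, s < d ∧ (k : ℕ) = s * i' ∧ (l : ℕ) = (s + 1) * i' then 1 else 0) :
    ((1 + N) ^ q) ⟨0, by omega⟩
      ⟨k0 * i', lt_of_le_of_lt (Nat.mul_le_mul_right i' hk0d) hdn⟩ = (q.choose k0 : S) := by
  have hcast : ∀ c : ℕ, ((c : ℕ) : Matrix (Fin n) (Fin n) S)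
      = Matrix.diagonal (fun _ => (c : S)) := fun c => rfl
  rw [add_comm, (Commute.one_right N).add_pow, Matrix.sum_apply]
  rw [Finset.sum_eq_single k0]
  · rw [one_pow, mul_one, hcast, Matrix.mul_diagonal, rowzero hi' hdn N hNdef k0,
      if_pos ⟨hk0d, rfl⟩, one_mul]
  · intro m _ hm
    rw [one_pow, mul_one, hcast, Matrix.mul_diagonal, rowzero hi' hdn N hNdef m, if_neg, zero_mul]
    rintro ⟨-, hv⟩
    exact hm (Nat.eq_of_mul_eq_mul_right hi' (by simpa using hv)).symm
  · intro h
    exact absurd (Finset.mem_range.mpr (by omega)) h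

theorem stmt_9 (p i i' j j' : ℕ) (hp : p.Prime) (hi : 1 ≤ i) (h1 : 1 ≤ i') (h2 : i' ≤ i) :
    pPow (UTk (ZMod (p ^ (j + 1))) (i + 1) i') (p ^ j') = ⊥ ↔
      j + 1 + Nat.log p (i / i') ≤ j' := by
  classical
  set R' := ZMod (p ^ (j + 1)) with hR'
  set q := p ^ j' with hqdef
  set d := i / i' with hddef
  have hi'0 : 0 < i' := h1
  have hd1 : 1 ≤ d := (Nat.one_le_div_iff hi'0).mpr h2
  have hdi : d * i' ≤ i := Nat.div_mul_le_self i i'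
  set t := Nat.log p d with htdef
  constructor
  · intro htriv
    by_contra hcon
    push_neg at hcon
    set N : Matrix (Fin (i + 1)) (Fin (i + 1)) R' :=
      Matrix.of fun k l => if ∃ s, s < d ∧ (k : ℕ) = s * i' ∧ (l : ℕ) = (s + 1) * i'
        then 1 else 0 with hNdef0
    have hNdef : ∀ k l : Fin (i + 1), N k l =
        if ∃ s, s < d ∧ (k : ℕ) = s * i' ∧ (l : ℕ) = (s + 1) * i' then 1 else 0 :=
      fun _ _ => rfl
    have hband : BandedM i' N := by
      intro k l hl
      rw [hNdef, if_neg]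
      rintro ⟨s, hs, hk, hl'⟩
      rw [Nat.succ_mul] at hl'
      linarith
    have hnil : IsNilpotent N := by
      refine ⟨i + 1, bandedM_eq_zero (bandedM_pow hband (i + 1)) ?_⟩
      calc i + 1 = (i + 1) * 1 := (mul_one _).symm
        _ ≤ (i + 1) * i' := Nat.mul_le_mul_left _ hi'0
    obtain ⟨u, hu⟩ := hnil.isUnit_one_add
    have hband' : ∀ k l : Fin (i + 1), (l : ℕ) < (k : ℕ) + i' → N k l = 0 := hband
    have hUT : u ∈ UT R' (i + 1) := by
      constructor
      · intro k
        rw [hu, Matrix.add_apply, Matrix.one_apply_eq, hband' k k (by omega), add_zero]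
      · intro k l hlk
        have hlk' : (l : ℕ) < (k : ℕ) := hlk
        rw [hu, Matrix.add_apply, Matrix.one_apply_ne (by intro h; subst h; omega),
          hband' k l (by omega), zero_add]
    have hz : (⟨u, hUT⟩ : ↥(UT R' (i + 1))) ∈ UTk R' (i + 1) i' := by
      intro k l hkl hli
      show (u : Matrix (Fin (i + 1)) (Fin (i + 1)) R') k l = 0
      rw [hu, Matrix.add_apply, Matrix.one_apply_ne (by intro h; subst h; omega),
        hband' k l hli, zero_add]
    have hmem : (⟨u, hUT⟩ : ↥(UT R' (i + 1))) ^ q ∈ pPow (UTk R' (i + 1) i') q :=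
      Subgroup.subset_closure ⟨_, hz, rfl⟩
    rw [htriv, Subgroup.mem_bot] at hmem
    have huq : (u : (Matrix (Fin (i + 1)) (Fin (i + 1)) R')ˣ) ^ q = 1 := by
      have hval : (((⟨u, hUT⟩ : ↥(UT R' (i + 1))) ^ q : ↥(UT R' (i + 1))) :
          (Matrix (Fin (i + 1)) (Fin (i + 1)) R')ˣ) = u ^ q := rfl
      rw [← hval, hmem]
      rfl
    have hmat : ((1 : Matrix (Fin (i + 1)) (Fin (i + 1)) R') + N) ^ q = 1 := by
      have hc := congrArg Units.val huq
      rw [Units.val_pow_eq_pow_val, hu] at hc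
      simpa using hc
    set k0 := p ^ (min t j') with hk0def
    have hk0pos : 0 < k0 := Nat.pow_pos hp.pos
    have hk0d : k0 ≤ d := le_trans (Nat.pow_le_pow_right hp.one_lt.le (min_le_left _ _))
      (Nat.pow_log_le_self p (by omega))
    have hk0q : k0 ≤ q := Nat.pow_le_pow_right hp.one_lt.le (min_le_right _ _)
    have hdn : d * i' < i + 1 := by omega
    have hent := backward_entry hi'0 hdn hk0d hk0q N hNdef
    have hk0i' : 0 < k0 * i' := Nat.mul_pos hk0pos hi'0
    rw [hmat, Matrix.one_apply_ne (by
      intro h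
      have hv := congrArg Fin.val h
      simp only [Fin.val_mk] at hv
      omega)] at hent
    have hdvd : p ^ (j + 1) ∣ q.choose k0 :=
      (ZMod.natCast_eq_zero_iff _ _).mp hent.symm
    exact aux_not_dvd_choose hp (min_le_right t j') (by omega) hdvd
  · intro hle
    unfold pPow
    rw [Subgroup.closure_eq_bot_iff]
    rintro x ⟨y, hy, rfl⟩
    rw [Set.mem_singleton_iff]
    set M : Matrix (Fin (i + 1)) (Fin (i + 1)) R' :=
      ((y : (Matrix (Fin (i + 1)) (Fin (i + 1)) R')ˣ) :
        Matrix (Fin (i + 1)) (Fin (i + 1)) R') with hMdef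
    have hdiag : ∀ k, M k k = 1 := y.2.1
    have hlow : ∀ k l : Fin (i + 1), l < k → M k l = 0 := y.2.2
    have hy' : ∀ k l : Fin (i + 1), (k : ℕ) < l → (l : ℕ) < k + i' → M k l = 0 := hy
    have hband : BandedM i' (M - 1) := by
      intro k l hl
      rcases lt_trichotomy (l : ℕ) (k : ℕ) with h | h | h
      · rw [Matrix.sub_apply, hlow k l (Fin.lt_def.mpr h),
          Matrix.one_apply_ne (by intro hh; subst hh; omega), sub_zero]
      · have hlk : k = l := Fin.ext h.symm
        subst hlk
        rw [Matrix.sub_apply, hdiag, Matrix.one_apply_eq, sub_self]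
      · rw [Matrix.sub_apply, hy' k l h hl,
          Matrix.one_apply_ne (by intro hh; subst hh; omega), sub_zero]
    have hcoef : ∀ k, 0 < k → k * i' < i + 1 → ((q.choose k : ℕ) : R') = 0 := by
      intro k hk hki
      rcases le_or_gt k q with hkq | hkq
      · show ((q.choose k : ℕ) : ZMod (p ^ (j + 1))) = 0
        rw [ZMod.natCast_eq_zero_iff]
        apply aux_dvd_choose hp hk.ne' hkq
        have hkd : k ≤ d := by
          rw [hddef]
          exact (Nat.le_div_iff_mul_le hi'0).mpr (by omega)
        have hlog := Nat.log_mono_right (b := p) hkd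
        omega
      · rw [Nat.choose_eq_zero_of_lt hkq, Nat.cast_zero]
    have hmat : M ^ q = 1 := by
      have hM1 : 1 + (M - 1) = M := by abel
      rw [← hM1]
      exact forward_matrix _ hband hcoef
    refine Subtype.ext (Units.ext ?_)
    show (((y : (Matrix (Fin (i + 1)) (Fin (i + 1)) R')ˣ) ^ q :
        (Matrix (Fin (i + 1)) (Fin (i + 1)) R')ˣ) :
        Matrix (Fin (i + 1)) (Fin (i + 1)) R') = 1
    rw [Units.val_pow_eq_pow_val]
    exact hmat
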